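/- For all positive integers k, the k-th positive element of the greedy B_3-set satisfies γ_k(3) ≤ (1/12)·k^5 + (5/12)·k^4 + (3/4)·k^3 + (13/12)·k^2 + (2/3)·k. -/

import Mathlib

/-- A set `A` of nonnegative integers is a `B_h`-set if every solution to
`a_1 + ... + a_h = b_1 + ... + b_h` with all `a_i, b_i ∈ A` has
`{a_1, ..., a_h} = {b_1, ..., b_h}` as multisets. -/
def IsBhSet (h : ℕ) (A : Set ℕ) : Prop :=
  ∀ a b : Fin h → ℕ, (∀ i, a i ∈ A) → (∀ i, b i ∈ A) →
    (∑ i, a i) = (∑ i, b i) →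
    Multiset.map a Finset.univ.val = Multiset.map b Finset.univ.val

/-- Auxiliary construction of the greedy `B_h`-set: `greedyAux h k` is the pair
consisting of the `k`-th element `γ_k(h)` of the greedy `B_h`-set together with
the finite set `{γ_0(h), ..., γ_k(h)}`.  We have `γ_0(h) = 0`, `γ_1(h) = 1`, and
for `k ≥ 1`, `γ_{k+1}(h)` is the smallest integer greater than `γ_k(h)` such
that `{γ_0(h), ..., γ_k(h), γ_{k+1}(h)}` is a `B_h`-set. -/
noncomputable def greedyAux (h : ℕ) : ℕ → ℕ × Finset ℕ
  | 0 => (0, {0})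
  | (k + 1) =>
    let p := greedyAux h k
    let g := if k = 0 then 1
      else sInf {x : ℕ | p.1 < x ∧ IsBhSet h ((insert x p.2 : Finset ℕ) : Set ℕ)}
    (g, insert g p.2)

/-- `greedy h k` is the `k`-th element `γ_k(h)` of the greedy `B_h`-set. -/
noncomputable def greedy (h k : ℕ) : ℕ := (greedyAux h k).1

/-- Two multisets are disjoint if no element occurs in both (old Mathlib definition). -/
def Multiset.Disjoint {α : Type*} (s t : Multiset α) : Prop :=
  ∀ ⦃a⦄, a ∈ s → a ∈ t → False

lemma isBh_anti {h : ℕ} {A B : Set ℕ} (hAB : A ⊆ B) (hB : IsBhSet h B) : IsBhSet h A :=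
  fun a b ha hb hs => hB a b (fun i => hAB (ha i)) (fun i => hAB (hb i)) hs

lemma exists_fn (s : Multiset ℕ) (h : Multiset.card s = 3) :
    ∃ f : Fin 3 → ℕ, Multiset.map f Finset.univ.val = s := by
  obtain ⟨x, y, z, rfl⟩ := Multiset.card_eq_three.1 h
  exact ⟨![x, y, z], rfl⟩

lemma ms01 (s : Multiset ℕ) (h : ∀ y ∈ s, y = 0 ∨ y = 1) :
    s = Multiset.replicate (Multiset.card s - s.sum) 0 + Multiset.replicate s.sum 1 := by
  induction s using Multiset.induction_on with
  | empty => simp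
  | cons a s ih =>
    have hs : s.sum ≤ Multiset.card s := by
      have := Multiset.sum_le_card_nsmul s 1
        (fun x hx => by rcases h x (Multiset.mem_cons_of_mem hx) with h1 | h1 <;> omega)
      simpa using this
    have ha := h a (Multiset.mem_cons_self a s)
    have ih' := ih (fun y hy => h y (Multiset.mem_cons_of_mem hy))
    rcases ha with rfl | rfl
    · have : Multiset.card (0 ::ₘ s) - (0 ::ₘ s).sum = (Multiset.card s - s.sum) + 1 := by
        simp; omega
      rw [this]
      simp only [Multiset.sum_cons, zero_add]
      rw [Multiset.replicate_succ]
      nth_rewrite 1 [ih']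
      simp [Multiset.cons_add]
    · have h2 : Multiset.card (1 ::ₘ s) - (1 ::ₘ s).sum = Multiset.card s - s.sum := by simp; omega
      have h1 : (1 ::ₘ s).sum = s.sum + 1 := by simp [add_comm]
      rw [h2, h1, Multiset.replicate_succ]
      nth_rewrite 1 [ih']
      rw [Multiset.add_cons]
lemma isBh_singleton_zero : IsBhSet 3 (({0} : Finset ℕ) : Set ℕ) := by
  intro a b ha hb _
  have ha' : ∀ i, a i = 0 := fun i => by simpa using ha i
  have hb' : ∀ i, b i = 0 := fun i => by simpa using hb i
  have : a = b := funext fun i => by rw [ha' i, hb' i]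
  rw [this]

lemma isBh_zero_one : IsBhSet 3 (({0, 1} : Finset ℕ) : Set ℕ) := by
  intro a b ha hb hsum
  have key : ∀ f : Fin 3 → ℕ, (∀ i, f i ∈ (({0, 1} : Finset ℕ) : Set ℕ)) →
      Multiset.map f Finset.univ.val
        = Multiset.replicate (3 - ∑ i, f i) 0 + Multiset.replicate (∑ i, f i) 1 := by
    intro f hf
    have h1 : ∀ y ∈ Multiset.map f Finset.univ.val, y = 0 ∨ y = 1 := by
      intro y hy
      obtain ⟨i, _, rfl⟩ := Multiset.mem_map.1 hy
      simpa using hf i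
    have := ms01 _ h1
    simpa [Fin.sum_univ_three, add_assoc] using this
  rw [key a ha, key b hb, hsum]
lemma rep_of_parts {A : Finset ℕ} {x : ℕ}
    {Na Nb : Multiset ℕ} (hd : Na.Disjoint Nb) (hsum : Na.sum = Nb.sum)
    (hcard : Multiset.card Na = Multiset.card Nb) (h3 : Multiset.card Nb ≤ 3)
    (hmem : ∀ y ∈ Na, y = x ∨ y ∈ A) (hmemb : ∀ y ∈ Nb, y ∈ A) (hxa : x ∈ Na) :
    ∃ (c : ℕ) (T S : Multiset ℕ), 1 ≤ c ∧ Multiset.card T + c = Multiset.card S ∧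
      Multiset.card S ≤ 3 ∧ (∀ t ∈ T, t ∈ A) ∧ (∀ s ∈ S, s ∈ A) ∧ T.Disjoint S ∧
      c * x + T.sum = S.sum := by
  classical
  set m := Na.count x with hm
  set T := Na.filter (· ≠ x) with hT
  have key : Multiset.replicate m x + T = Na := by
    rw [hm, ← Multiset.filter_eq']
    exact Multiset.filter_add_not _ Na
  have hm1 : 1 ≤ m := Multiset.count_pos.2 hxa
  refine ⟨m, T, Nb, hm1, ?_, h3, ?_, hmemb, ?_, ?_⟩
  · have := congrArg Multiset.card key
    simp only [Multiset.card_add, Multiset.card_replicate] at this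
    omega
  · intro t ht
    have h1 := Multiset.of_mem_filter ht
    have h2 := Multiset.mem_of_mem_filter ht
    rcases hmem t h2 with rfl | h
    · exact absurd rfl h1
    · exact h
  · exact fun a ha hb => hd (Multiset.mem_of_le (Multiset.filter_le _ Na) ha) hb
  · have := congrArg Multiset.sum key
    simp only [Multiset.sum_add, Multiset.sum_replicate, smul_eq_mul] at this
    rw [this, hsum]

lemma bad_rep {A : Finset ℕ} (hA : IsBhSet 3 (A : Set ℕ)) (h0 : (0 : ℕ) ∈ A) {x : ℕ}
    (hx : x ∉ A) (hbad : ¬ IsBhSet 3 ((insert x A : Finset ℕ) : Set ℕ)) :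
    ∃ (c : ℕ) (T S : Multiset ℕ), 1 ≤ c ∧ Multiset.card T + c = Multiset.card S ∧
      Multiset.card S ≤ 3 ∧ (∀ t ∈ T, t ∈ A) ∧ (∀ s ∈ S, s ∈ A) ∧ T.Disjoint S ∧
      c * x + T.sum = S.sum := by
  classical
  simp only [IsBhSet, not_forall] at hbad
  obtain ⟨a, b, ha, hb, hsum, hne⟩ := hbad
  set Ma := Multiset.map a Finset.univ.val with hMa
  set Mb := Multiset.map b Finset.univ.val with hMb
  have hMaCard : Multiset.card Ma = 3 := rfl
  have hMbCard : Multiset.card Mb = 3 := rfl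
  have hMaSum : Ma.sum = ∑ i, a i := rfl
  have hMbSum : Mb.sum = ∑ i, b i := rfl
  have hMamem : ∀ y ∈ Ma, y = x ∨ y ∈ A := by
    intro y hy
    obtain ⟨i, _, rfl⟩ := Multiset.mem_map.1 hy
    simpa using ha i
  have hMbmem : ∀ y ∈ Mb, y = x ∨ y ∈ A := by
    intro y hy
    obtain ⟨i, _, rfl⟩ := Multiset.mem_map.1 hy
    simpa using hb i
  set Na := Ma - Mb with hNa
  set Nb := Mb - Ma with hNb
  have ida : Na + Ma ∩ Mb = Ma := Multiset.sub_add_inter Ma Mb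
  have idb : Nb + Ma ∩ Mb = Mb := by
    rw [Multiset.inter_comm]; exact Multiset.sub_add_inter Mb Ma
  have hcard : Multiset.card Na = Multiset.card Nb := by
    have c1 := congrArg Multiset.card ida
    have c2 := congrArg Multiset.card idb
    simp only [Multiset.card_add] at c1 c2
    omega
  have hcard3 : Multiset.card Nb ≤ 3 := by
    have c2 := congrArg Multiset.card idb
    simp only [Multiset.card_add] at c2
    omega
  have hsum' : Na.sum = Nb.sum := by
    have s1 := congrArg Multiset.sum ida
    have s2 := congrArg Multiset.sum idb
    simp only [Multiset.sum_add] at s1 s2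
    have : Ma.sum = Mb.sum := by rw [hMaSum, hMbSum, hsum]
    omega
  have hdisj : Na.Disjoint Nb := by
    intro y hyA hyB
    have cA : 0 < Na.count y := Multiset.count_pos.2 hyA
    have cB : 0 < Nb.count y := Multiset.count_pos.2 hyB
    rw [hNa, Multiset.count_sub] at cA
    rw [hNb, Multiset.count_sub] at cB
    omega
  have hNane : Na ≠ 0 := by
    intro h0'
    apply hne
    have hle : Ma ≤ Mb := by
      rw [← tsub_eq_zero_iff_le]; exact h0'
    exact Multiset.eq_of_le_of_card_le hle (by rw [hMaCard, hMbCard])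
  have hNamem : ∀ y ∈ Na, y = x ∨ y ∈ A :=
    fun y hy => hMamem y (Multiset.mem_of_le (tsub_le_self) hy)
  have hNbmem : ∀ y ∈ Nb, y = x ∨ y ∈ A :=
    fun y hy => hMbmem y (Multiset.mem_of_le (tsub_le_self) hy)
  by_cases hxa : x ∈ Na
  · have hNbA : ∀ y ∈ Nb, y ∈ A := by
      intro y hy
      rcases hNbmem y hy with rfl | h
      · exact absurd hy (hdisj hxa)
      · exact h
    exact rep_of_parts hdisj hsum' hcard hcard3 hNamem hNbA hxa
  by_cases hxb : x ∈ Nb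
  · have hNaA : ∀ y ∈ Na, y ∈ A := by
      intro y hy
      rcases hNamem y hy with rfl | h
      · exact absurd hxb (hdisj hy)
      · exact h
    exact rep_of_parts (fun a ha hb => hdisj hb ha) hsum'.symm hcard.symm
      (by omega) hNbmem hNaA hxb
  · -- x in neither: contradiction with A being a B₃-set
    exfalso
    have hNaA : ∀ y ∈ Na, y ∈ A := by
      intro y hy
      rcases hNamem y hy with rfl | h
      · exact absurd hy hxa
      · exact h
    have hNbA : ∀ y ∈ Nb, y ∈ A := by
      intro y hy
      rcases hNbmem y hy with rfl | h
      · exact absurd hy hxb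
      · exact h
    set d := Multiset.card Na with hd
    have hd3 : d ≤ 3 := by omega
    set sa := Na + Multiset.replicate (3 - d) 0 with hsa
    set sb := Nb + Multiset.replicate (3 - d) 0 with hsb
    have hsaCard : Multiset.card sa = 3 := by
      rw [hsa]; simp only [Multiset.card_add, Multiset.card_replicate]; omega
    have hsbCard : Multiset.card sb = 3 := by
      rw [hsb]; simp only [Multiset.card_add, Multiset.card_replicate]; omega
    obtain ⟨f, hf⟩ := exists_fn sa hsaCard
    obtain ⟨g, hg⟩ := exists_fn sb hsbCard
    have hfmem : ∀ i, f i ∈ (A : Set ℕ) := by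
      intro i
      have : f i ∈ sa := by
        rw [← hf]
        exact Multiset.mem_map_of_mem f (Finset.mem_univ i)
      rw [hsa] at this
      rcases Multiset.mem_add.1 this with h | h
      · exact hNaA _ h
      · have : f i = 0 := Multiset.eq_of_mem_replicate h
        rw [this]; exact h0
    have hgmem : ∀ i, g i ∈ (A : Set ℕ) := by
      intro i
      have : g i ∈ sb := by
        rw [← hg]
        exact Multiset.mem_map_of_mem g (Finset.mem_univ i)
      rw [hsb] at this
      rcases Multiset.mem_add.1 this with h | h
      · exact hNbA _ h
      · have : g i = 0 := Multiset.eq_of_mem_replicate h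
        rw [this]; exact h0
    have hsumfg : (∑ i, f i) = ∑ i, g i := by
      have e1 : (∑ i, f i) = sa.sum := by rw [← hf]; rfl
      have e2 : (∑ i, g i) = sb.sum := by rw [← hg]; rfl
      rw [e1, e2, hsa, hsb, Multiset.sum_add, Multiset.sum_add, hsum']
    have := hA f g hfmem hgmem hsumfg
    rw [hf, hg] at this
    have hNaNb : Na = Nb := by
      rw [hsa, hsb] at this
      exact add_right_cancel this
    obtain ⟨y, hy⟩ := Multiset.exists_mem_of_ne_zero hNane
    exact hdisj hy (hNaNb ▸ hy)
lemma card_sym_le (A : Finset ℕ) (j : ℕ) : (A.sym j).card ≤ Nat.multichoose A.card j := by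
  classical
  have hs : Set.SurjOn (Sym.map Subtype.val)
      (↑(Finset.univ : Finset (Sym {x // x ∈ A} j)) : Set (Sym {x // x ∈ A} j))
      (↑(A.sym j) : Set (Sym ℕ j)) := by
    intro m hm
    simp only [Finset.mem_coe] at hm
    refine ⟨⟨(m.1.attach).map (fun y => (⟨y.1, Finset.mem_sym_iff.1 hm _ y.2⟩ : {x // x ∈ A})),
      by simp [m.2]⟩, Finset.mem_coe.2 (Finset.mem_univ _), ?_⟩
    apply Subtype.ext
    simp [Sym.map, Multiset.map_map, Function.comp_def]
  simpa [Sym.card_sym_eq_multichoose, Fintype.card_coe] using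
    Finset.card_le_card_of_surjOn _ hs

lemma multichoose_mono {a b : ℕ} (n : ℕ) (h : a ≤ b) :
    Nat.multichoose a n ≤ Nat.multichoose b n := by
  rw [Nat.multichoose_eq, Nat.multichoose_eq]
  exact Nat.choose_le_choose _ (by omega)

/-- Covering set for the bad values with parameters `(i, j)`. -/
noncomputable def cov (A : Finset ℕ) (i j : ℕ) : Finset ℕ := by
  classical
  exact (A.sym i).biUnion fun T =>
    ((A.filter fun s => s ∉ T.1).sym j).image fun S => (S.1.sum - T.1.sum) / (j - i)

/-- Covering set for all bad values. -/
noncomputable def cover (A : Finset ℕ) : Finset ℕ :=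
  cov A 0 1 ∪ cov A 0 2 ∪ cov A 0 3 ∪ cov A 1 2 ∪ cov A 1 3 ∪ cov A 2 3

lemma cov_mono {A B : Finset ℕ} (h : A ⊆ B) (i j : ℕ) : cov A i j ⊆ cov B i j := by
  classical
  intro x hx
  obtain ⟨T, hT, hx2⟩ := Finset.mem_biUnion.1 hx
  obtain ⟨S, hS, hval⟩ := Finset.mem_image.1 hx2
  refine Finset.mem_biUnion.2 ⟨T, Finset.sym_mono h i hT, Finset.mem_image.2
    ⟨S, Finset.sym_mono (Finset.filter_subset_filter _ h) j hS, hval⟩⟩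

lemma cover_mono {A B : Finset ℕ} (h : A ⊆ B) : cover A ⊆ cover B := by
  simp only [cover]
  gcongr <;> exact cov_mono h _ _

lemma mem_cov {A : Finset ℕ} {x c : ℕ} {T S : Multiset ℕ} (hc : 1 ≤ c)
    (hTS : Multiset.card T + c = Multiset.card S) (hT : ∀ t ∈ T, t ∈ A)
    (hS : ∀ s ∈ S, s ∈ A) (hd : T.Disjoint S) (heq : c * x + T.sum = S.sum) :
    x ∈ cov A (Multiset.card T) (Multiset.card S) := by
  classical
  refine Finset.mem_biUnion.2 ⟨⟨T, rfl⟩, Finset.mem_sym_iff.2 (fun a ha => hT a ha),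
    Finset.mem_image.2 ⟨⟨S, rfl⟩, ?_, ?_⟩⟩
  · refine Finset.mem_sym_iff.2 (fun a ha => Finset.mem_filter.2 ⟨hS a ha, ?_⟩)
    exact fun haT => hd haT ha
  · show (S.sum - T.sum) / (Multiset.card S - Multiset.card T) = x
    have h1 : S.sum - T.sum = c * x := by omega
    have h2 : Multiset.card S - Multiset.card T = c := by omega
    rw [h1, h2, Nat.mul_div_cancel_left x (by omega)]

lemma bad_mem_cover {A : Finset ℕ} (hA : IsBhSet 3 (A : Set ℕ)) (h0 : (0 : ℕ) ∈ A) {x : ℕ}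
    (hx : x ∉ A) (hbad : ¬ IsBhSet 3 ((insert x A : Finset ℕ) : Set ℕ)) :
    x ∈ cover A := by
  obtain ⟨c, T, S, hc, hTS, hS3, hT, hS, hd, heq⟩ := bad_rep hA h0 hx hbad
  have hmem := mem_cov hc hTS hT hS hd heq
  have h' : ∀ i j : ℕ, Multiset.card T = i → Multiset.card S = j → x ∈ cov A i j :=
    fun i j hi hj => hi ▸ hj ▸ hmem
  have hij : Multiset.card T < Multiset.card S := by omega
  have hT0 : Multiset.card T = 0 ∨ Multiset.card T = 1 ∨ Multiset.card T = 2 := by omega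
  have hS0 : Multiset.card S = 1 ∨ Multiset.card S = 2 ∨ Multiset.card S = 3 := by omega
  rcases hT0 with h|h|h <;> rcases hS0 with h'|h'|h' <;> rw [h, h'] at hmem <;>
    simp only [cover, Finset.mem_union] <;>
    first | tauto | exact absurd hij (by omega)
lemma cov_card_zero (A : Finset ℕ) (j : ℕ) :
    (cov A 0 j).card ≤ Nat.multichoose A.card j := by
  classical
  refine le_trans Finset.card_biUnion_le ?_
  refine le_trans (Finset.sum_le_card_nsmul _ _ (Nat.multichoose A.card j) ?_) ?_
  · intro T _
    refine le_trans Finset.card_image_le ?_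
    refine le_trans (card_sym_le _ j) (multichoose_mono j ?_)
    exact Finset.card_filter_le _ _
  · have : (A.sym 0).card = 1 := by simp
    simp [this]

lemma cov_card_pos (A : Finset ℕ) (i j : ℕ) (hi : 1 ≤ i) :
    (cov A i j).card ≤ Nat.multichoose A.card i * Nat.multichoose (A.card - 1) j := by
  classical
  refine le_trans Finset.card_biUnion_le ?_
  refine le_trans (Finset.sum_le_card_nsmul _ _ (Nat.multichoose (A.card - 1) j) ?_) ?_
  · intro T hT
    refine le_trans Finset.card_image_le ?_
    refine le_trans (card_sym_le _ j) (multichoose_mono j ?_)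
    -- the filtered set omits at least one element of A
    have hTne : T.1 ≠ 0 := by
      intro h0
      have := T.2
      rw [h0] at this
      simp at this
      omega
    obtain ⟨t, ht⟩ := Multiset.exists_mem_of_ne_zero hTne
    have htA : t ∈ A := Finset.mem_sym_iff.1 hT t ht
    have hsub : (A.filter fun s => s ∉ T.1) ⊆ A.erase t := by
      intro y hy
      obtain ⟨hyA, hyT⟩ := Finset.mem_filter.1 hy
      exact Finset.mem_erase.2 ⟨fun hyt => hyT (hyt ▸ ht), hyA⟩
    calc (A.filter fun s => s ∉ T.1).card ≤ (A.erase t).card := Finset.card_le_card hsub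
      _ = A.card - 1 := Finset.card_erase_of_mem htA
  · rw [smul_eq_mul]
    exact Nat.mul_le_mul_right _ (card_sym_le A i)

lemma cover_card (A : Finset ℕ) :
    (cover A).card ≤ Nat.multichoose A.card 1 + Nat.multichoose A.card 2
      + Nat.multichoose A.card 3
      + Nat.multichoose A.card 1 * Nat.multichoose (A.card - 1) 2
      + Nat.multichoose A.card 1 * Nat.multichoose (A.card - 1) 3
      + Nat.multichoose A.card 2 * Nat.multichoose (A.card - 1) 3 := by
  classical
  have h01 := cov_card_zero A 1
  have h02 := cov_card_zero A 2
  have h03 := cov_card_zero A 3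
  have h12 := cov_card_pos A 1 2 le_rfl
  have h13 := cov_card_pos A 1 3 le_rfl
  have h23 := cov_card_pos A 2 3 one_le_two
  have := Finset.card_union_le (cov A 0 1 ∪ cov A 0 2 ∪ cov A 0 3 ∪ cov A 1 2 ∪ cov A 1 3)
    (cov A 2 3)
  have h2 := Finset.card_union_le (cov A 0 1 ∪ cov A 0 2 ∪ cov A 0 3 ∪ cov A 1 2) (cov A 1 3)
  have h3 := Finset.card_union_le (cov A 0 1 ∪ cov A 0 2 ∪ cov A 0 3) (cov A 1 2)
  have h4 := Finset.card_union_le (cov A 0 1 ∪ cov A 0 2) (cov A 0 3)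
  have h5 := Finset.card_union_le (cov A 0 1) (cov A 0 2)
  simp only [cover]
  omega
lemma greedyAux_succ_snd (k : ℕ) :
    (greedyAux 3 (k + 1)).2 = insert (greedyAux 3 (k + 1)).1 (greedyAux 3 k).2 := rfl

lemma greedyAux_succ_fst (k : ℕ) (hk : k ≠ 0) :
    (greedyAux 3 (k + 1)).1 = sInf {x : ℕ | (greedyAux 3 k).1 < x ∧
      IsBhSet 3 ((insert x (greedyAux 3 k).2 : Finset ℕ) : Set ℕ)} := by
  simp [greedyAux, hk]

lemma greedyAux_one : greedyAux 3 1 = (1, insert 1 {0}) := by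
  simp [greedyAux]

lemma greedy_inv (k : ℕ) :
    IsBhSet 3 (((greedyAux 3 k).2 : Finset ℕ) : Set ℕ) ∧
    (0 : ℕ) ∈ (greedyAux 3 k).2 ∧
    (greedyAux 3 k).1 ∈ (greedyAux 3 k).2 ∧
    (∀ y ∈ (greedyAux 3 k).2, y ≤ (greedyAux 3 k).1) ∧
    (greedyAux 3 k).2.card ≤ k + 1 ∧
    (∀ y, y < (greedyAux 3 k).1 → y ∉ (greedyAux 3 k).2 →
      ¬ IsBhSet 3 ((insert y (greedyAux 3 (k - 1)).2 : Finset ℕ) : Set ℕ)) := by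
  induction k with
  | zero =>
    refine ⟨?_, ?_, ?_, ?_, ?_, ?_⟩
    · show IsBhSet 3 (({0} : Finset ℕ) : Set ℕ)
      exact isBh_singleton_zero
    · exact Finset.mem_singleton_self 0
    · exact Finset.mem_singleton_self 0
    · intro y hy
      simp only [show (greedyAux 3 0).2 = {0} from rfl, Finset.mem_singleton] at hy
      omega
    · show ({0} : Finset ℕ).card ≤ 1
      simp
    · intro y hy
      exact absurd hy (by simp [show (greedyAux 3 0).1 = 0 from rfl])
  | succ k ih =>
    by_cases hk : k = 0
    · subst hk
      rw [greedyAux_one]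
      refine ⟨?_, ?_, ?_, ?_, ?_, ?_⟩
      · have hset : ((insert 1 {0} : Finset ℕ) : Set ℕ) = (({0, 1} : Finset ℕ) : Set ℕ) := by
          ext y; simp; tauto
        rw [hset]
        exact isBh_zero_one
      · simp
      · simp
      · intro y hy
        simp at hy
        omega
      · exact le_trans (Finset.card_insert_le 1 {0}) (by simp)
      · intro y hy hymem
        simp only [Finset.mem_insert, Finset.mem_singleton] at hymem
        omega
    · -- k ≥ 1
      obtain ⟨ihB, ih0, ihg, ihle, ihcard, ihbad⟩ := ih
      set p := greedyAux 3 k with hp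
      set SK := {x : ℕ | p.1 < x ∧ IsBhSet 3 ((insert x p.2 : Finset ℕ) : Set ℕ)} with hSK
      have hfst : (greedyAux 3 (k + 1)).1 = sInf SK := greedyAux_succ_fst k hk
      have hsnd : (greedyAux 3 (k + 1)).2 = insert (sInf SK) p.2 := by
        rw [greedyAux_succ_snd, hfst]
      -- SK is nonempty
      have hSKne : SK.Nonempty := by
        classical
        set C := cover p.2 with hC
        set I := Finset.Ioc p.1 (p.1 + C.card + 1) with hI
        have hIcard : I.card = C.card + 1 := by simp [hI]; omega
        have : 1 ≤ (I \ C).card := by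
          have := Finset.le_card_sdiff C I
          omega
        obtain ⟨x, hx⟩ := Finset.card_pos.1 this
        obtain ⟨hxI, hxC⟩ := Finset.mem_sdiff.1 hx
        have hxgt : p.1 < x := (Finset.mem_Ioc.1 hxI).1
        have hxnot : x ∉ p.2 := fun hmem => absurd (ihle x hmem) (by omega)
        refine ⟨x, hxgt, ?_⟩
        by_contra hbad
        exact hxC (bad_mem_cover ihB ih0 hxnot hbad)
      have hmem := Nat.sInf_mem hSKne
      obtain ⟨hgt, hBh⟩ := hmem
      refine ⟨?_, ?_, ?_, ?_, ?_, ?_⟩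
      · rw [hsnd]; exact hBh
      · rw [hsnd]; exact Finset.mem_insert_of_mem ih0
      · rw [hsnd, hfst]; exact Finset.mem_insert_self _ _
      · intro y hy
        rw [hsnd] at hy
        rw [hfst]
        rcases Finset.mem_insert.1 hy with rfl | hy'
        · exact le_rfl
        · exact le_of_lt (lt_of_le_of_lt (ihle y hy') hgt)
      · rw [hsnd]
        exact le_trans (Finset.card_insert_le _ _) (by omega)
      · intro y hylt hymem
        rw [hfst] at hylt
        rw [hsnd] at hymem
        simp only [Nat.add_sub_cancel]
        have hynotp : y ∉ p.2 := fun h => hymem (Finset.mem_insert_of_mem h)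
        rcases Nat.lt_or_ge y p.1 with hy | hy
        · -- use the induction hypothesis and monotonicity
          have hbadprev := ihbad y hy hynotp
          intro hIsB
          apply hbadprev
          refine isBh_anti ?_ hIsB
          intro z hz
          simp only [Finset.coe_insert, Set.mem_insert_iff, Finset.mem_coe] at hz ⊢
          rcases hz with rfl | hz
          · exact Or.inl rfl
          · right
            -- A_{k-1} ⊆ A_k
            have hsub : (greedyAux 3 (k - 1)).2 ⊆ p.2 := by
              obtain ⟨j, rfl⟩ : ∃ j, k = j + 1 := ⟨k - 1, by omega⟩
              rw [hp, greedyAux_succ_snd]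
              simp only [Nat.add_sub_cancel]
              exact Finset.subset_insert _ _
            exact hsub hz
        · have hyne : y ≠ p.1 := fun h => hynotp (h ▸ ihg)
          have hygt : p.1 < y := by omega
          have hynot : y ∉ SK := Nat.notMem_of_lt_sInf hylt
          intro hIsB
          exact hynot ⟨hygt, hIsB⟩
lemma choose2 (m : ℕ) : 2 * (m + 1).choose 2 = m * (m + 1) := by
  induction m with
  | zero => rfl
  | succ m ih =>
    rw [show m + 1 + 1 = (m + 1) + 1 from rfl, Nat.choose_succ_succ (m + 1) 1,
      Nat.mul_add, ih, Nat.choose_one_right]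
    ring

lemma choose3 (m : ℕ) : 6 * (m + 2).choose 3 = m * (m + 1) * (m + 2) := by
  induction m with
  | zero => rfl
  | succ m ih =>
    rw [show m + 1 + 2 = (m + 2) + 1 from rfl, Nat.choose_succ_succ (m + 2) 2,
      Nat.mul_add, ih]
    have h2 := choose2 (m + 1)
    have : 6 * (m + 2).choose 2 = 3 * (2 * (m + 1 + 1).choose 2) := by ring_nf
    rw [this, h2]
    ring

lemma greedy_le (k : ℕ) (hk : 1 ≤ k) :
    (greedyAux 3 k).1 ≤ k + 2 + (Nat.multichoose k 1 + Nat.multichoose k 2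
      + Nat.multichoose k 3 + Nat.multichoose k 1 * Nat.multichoose (k - 1) 2
      + Nat.multichoose k 1 * Nat.multichoose (k - 1) 3
      + Nat.multichoose k 2 * Nat.multichoose (k - 1) 3) := by
  classical
  obtain ⟨j, rfl⟩ : ∃ j, k = j + 1 := ⟨k - 1, by omega⟩
  obtain ⟨hB, h0, hg, hle, hcard, hbad⟩ := greedy_inv (j + 1)
  obtain ⟨hBp, h0p, _, _, hcardp, _⟩ := greedy_inv j
  set Ap := (greedyAux 3 j).2 with hAp
  set A := (greedyAux 3 (j + 1)).2 with hA
  set g := (greedyAux 3 (j + 1)).1 with hg'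
  have hApA : Ap ⊆ A := by
    rw [hA, greedyAux_succ_snd]
    exact Finset.subset_insert _ _
  have hsub : Finset.Ico 1 g ⊆ A ∪ cover Ap := by
    intro y hy
    obtain ⟨hy1, hy2⟩ := Finset.mem_Ico.1 hy
    by_cases hyA : y ∈ A
    · exact Finset.mem_union_left _ hyA
    · refine Finset.mem_union_right _ ?_
      have hbady := hbad y hy2 hyA
      simp only [Nat.add_sub_cancel] at hbady
      exact bad_mem_cover hBp h0p (fun h => hyA (hApA h)) hbady
  have hcount : g - 1 ≤ A.card + (cover Ap).card := by
    have h1 : (Finset.Ico 1 g).card = g - 1 := by simp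
    have h2 := Finset.card_le_card hsub
    have h3 := Finset.card_union_le A (cover Ap)
    omega
  have hcov := cover_card Ap
  have hn : Ap.card ≤ j + 1 := by
    have := hcardp; omega
  -- monotone transfer of the multichoose bounds
  have m1 : Nat.multichoose Ap.card 1 ≤ Nat.multichoose (j + 1) 1 := multichoose_mono _ hn
  have m2 : Nat.multichoose Ap.card 2 ≤ Nat.multichoose (j + 1) 2 := multichoose_mono _ hn
  have m3 : Nat.multichoose Ap.card 3 ≤ Nat.multichoose (j + 1) 3 := multichoose_mono _ hn
  have m2' : Nat.multichoose (Ap.card - 1) 2 ≤ Nat.multichoose (j + 1 - 1) 2 :=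
    multichoose_mono _ (by omega)
  have m3' : Nat.multichoose (Ap.card - 1) 3 ≤ Nat.multichoose (j + 1 - 1) 3 :=
    multichoose_mono _ (by omega)
  have hprod1 : Nat.multichoose Ap.card 1 * Nat.multichoose (Ap.card - 1) 2
      ≤ Nat.multichoose (j + 1) 1 * Nat.multichoose (j + 1 - 1) 2 := Nat.mul_le_mul m1 m2'
  have hprod2 : Nat.multichoose Ap.card 1 * Nat.multichoose (Ap.card - 1) 3
      ≤ Nat.multichoose (j + 1) 1 * Nat.multichoose (j + 1 - 1) 3 := Nat.mul_le_mul m1 m3'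
  have hprod3 : Nat.multichoose Ap.card 2 * Nat.multichoose (Ap.card - 1) 3
      ≤ Nat.multichoose (j + 1) 2 * Nat.multichoose (j + 1 - 1) 3 := Nat.mul_le_mul m2 m3'
  have hAcard : A.card ≤ j + 2 := hcard
  omega

theorem stmt_8 (k : ℕ) (hk : 1 ≤ k) :
    (greedy 3 k : ℚ) ≤ (1 / 12) * (k : ℚ) ^ 5 + (5 / 12) * (k : ℚ) ^ 4
      + (3 / 4) * (k : ℚ) ^ 3 + (13 / 12) * (k : ℚ) ^ 2 + (2 / 3) * (k : ℚ) := by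
  rcases Nat.lt_or_ge k 2 with hk2 | hk2
  · -- k = 1
    have hk1 : k = 1 := by omega
    subst hk1
    have : greedy 3 1 = 1 := by rw [greedy, greedyAux_one]
    rw [this]
    norm_num
  · -- k ≥ 2
    obtain ⟨j, rfl⟩ : ∃ j, k = j + 2 := ⟨k - 2, by omega⟩
    have hb := greedy_le (j + 2) (by omega)
    rw [← greedy] at hb
    -- express the multichoose values
    have e1 : Nat.multichoose (j + 2) 1 = j + 2 := by
      rw [Nat.multichoose_eq]
      simp
    have e2 : 2 * Nat.multichoose (j + 2) 2 = (j + 2) * (j + 3) := by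
      rw [Nat.multichoose_eq]
      exact choose2 (j + 2)
    have e3 : 6 * Nat.multichoose (j + 2) 3 = (j + 2) * (j + 3) * (j + 4) := by
      rw [Nat.multichoose_eq]
      exact choose3 (j + 2)
    have e2' : 2 * Nat.multichoose (j + 2 - 1) 2 = (j + 1) * (j + 2) := by
      rw [Nat.multichoose_eq]
      exact choose2 (j + 1)
    have e3' : 6 * Nat.multichoose (j + 2 - 1) 3 = (j + 1) * (j + 2) * (j + 3) := by
      rw [Nat.multichoose_eq]
      exact choose3 (j + 1)
    -- cast everything to ℚ
    set a := Nat.multichoose (j + 2) 2 with ha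
    set b := Nat.multichoose (j + 2) 3 with hbb
    set c := Nat.multichoose (j + 2 - 1) 2 with hc
    set d := Nat.multichoose (j + 2 - 1) 3 with hd
    have hq : (greedy 3 (j + 2) : ℚ) ≤ (j : ℚ) + 2 + 2
        + ((j + 2) + a + b + (j + 2) * c + (j + 2) * d + a * d) := by
      have := hb
      rw [e1] at this
      push_cast
      exact_mod_cast this
    have qa : (a : ℚ) = (j + 2) * (j + 3) / 2 := by
      have : ((2 * a : ℕ) : ℚ) = (((j + 2) * (j + 3) : ℕ) : ℚ) := by rw [e2]
      push_cast at this
      linarith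
    have qb : (b : ℚ) = (j + 2) * (j + 3) * (j + 4) / 6 := by
      have : ((6 * b : ℕ) : ℚ) = (((j + 2) * (j + 3) * (j + 4) : ℕ) : ℚ) := by rw [e3]
      push_cast at this
      linarith
    have qc : (c : ℚ) = (j + 1) * (j + 2) / 2 := by
      have : ((2 * c : ℕ) : ℚ) = (((j + 1) * (j + 2) : ℕ) : ℚ) := by rw [e2']
      push_cast at this
      linarith
    have qd : (d : ℚ) = (j + 1) * (j + 2) * (j + 3) / 6 := by
      have : ((6 * d : ℕ) : ℚ) = (((j + 1) * (j + 2) * (j + 3) : ℕ) : ℚ) := by rw [e3']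
      push_cast at this
      linarith
    rw [qa, qb, qc, qd] at hq
    have hj0 : (0 : ℚ) ≤ (j : ℚ) := by positivity
    push_cast
    nlinarith [hq, hj0, sq_nonneg ((j : ℚ)), mul_nonneg hj0 hj0,
      mul_nonneg (mul_nonneg hj0 hj0) hj0, mul_nonneg (mul_nonneg (mul_nonneg hj0 hj0) hj0) hj0]
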